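/- Let n ≥ 3 and suppose the closed Euclidean unit ball B^n ⊂ ℝ^n is covered by finitely many 2-dimensional Euclidean cylinders Z_1, …, Z_N, where each Z_i is the image under a Euclidean isometry of ℝ^n of a set X_i × ℝ² (identifying ℝ^n with ℝ^{n−2} × ℝ²) with X_i a convex body in ℝ^{n−2}. Then Σ_{i=1}^{N} vol_{n−2}(X_i) ≥ vol_{n−2}(B^{n−2}) = π^{n/2−1}/Γ(n/2). -/

import Mathlib

open MeasureTheory
open ENNReal Set
lemma annulus_vol_le (d : EuclideanSpace ℝ (Fin 2)) (a b : ℝ) (hab : a ≤ b) :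
    volume {u : EuclideanSpace ℝ (Fin 2) | a ≤ dist u d ^ 2 ∧ dist u d ^ 2 ≤ b} ≤
      ENNReal.ofReal (Real.pi * (b - a)) := by
  rcases lt_or_ge b 0 with hb | hb
  · have he : {u : EuclideanSpace ℝ (Fin 2) | a ≤ dist u d ^ 2 ∧ dist u d ^ 2 ≤ b} = ∅ := by
      ext u
      simp only [mem_setOf_eq, mem_empty_iff_false, iff_false, not_and, not_le]
      exact fun _ => lt_of_lt_of_le hb (sq_nonneg _)
    simp [he]
  · set a' := max a 0 with ha'
    have ha'b : a' ≤ b := max_le hab hb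
    have hsub : {u : EuclideanSpace ℝ (Fin 2) | a ≤ dist u d ^ 2 ∧ dist u d ^ 2 ≤ b} ⊆
        Metric.closedBall d (Real.sqrt b) \ Metric.ball d (Real.sqrt a') := by
      intro u hu
      constructor
      · exact Metric.mem_closedBall.mpr (by
          have := Real.sqrt_le_sqrt hu.2
          rwa [Real.sqrt_sq dist_nonneg] at this)
      · intro hmem
        rw [Metric.mem_ball] at hmem
        have h1 : dist u d ^ 2 < a' := by
          have h2 : dist u d ^ 2 < Real.sqrt a' ^ 2 := by
            apply sq_lt_sq' _ hmem
            have : (0:ℝ) ≤ Real.sqrt a' := Real.sqrt_nonneg _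
            linarith [dist_nonneg (x := u) (y := d)]
          rwa [Real.sq_sqrt (le_max_right a (0:ℝ))] at h2
        exact absurd h1 (not_lt.mpr (max_le hu.1 (sq_nonneg _)))
    calc volume {u : EuclideanSpace ℝ (Fin 2) | a ≤ dist u d ^ 2 ∧ dist u d ^ 2 ≤ b}
        ≤ volume (Metric.closedBall d (Real.sqrt b) \ Metric.ball d (Real.sqrt a')) :=
          measure_mono hsub
      _ ≤ ENNReal.ofReal (Real.pi * (b - a)) := by
          rw [measure_diff (Metric.ball_subset_closedBall.trans
                (Metric.closedBall_subset_closedBall (Real.sqrt_le_sqrt ha'b)))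
              measurableSet_ball.nullMeasurableSet measure_ball_lt_top.ne]
          have hb2 : volume (Metric.closedBall d (Real.sqrt b)) =
              ENNReal.ofReal Real.pi * ENNReal.ofReal b := by
            rw [EuclideanSpace.volume_closedBall]
            simp only [Fintype.card_fin]
            rw [show ((2:ℕ):ℝ)/2 + 1 = 2 by norm_num, Real.Gamma_two, div_one,
              Real.sq_sqrt Real.pi_nonneg,
              ← ENNReal.ofReal_pow (Real.sqrt_nonneg _), Real.sq_sqrt hb, mul_comm]
          have ha2 : volume (Metric.ball d (Real.sqrt a')) =
              ENNReal.ofReal Real.pi * ENNReal.ofReal a' := by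
            rw [EuclideanSpace.volume_ball]
            simp only [Fintype.card_fin]
            rw [show ((2:ℕ):ℝ)/2 + 1 = 2 by norm_num, Real.Gamma_two, div_one,
              Real.sq_sqrt Real.pi_nonneg,
              ← ENNReal.ofReal_pow (Real.sqrt_nonneg _), Real.sq_sqrt (le_max_right a 0),
              mul_comm]
          rw [hb2, ha2, ← ENNReal.mul_sub (fun _ _ => ENNReal.ofReal_ne_top),
            ← ENNReal.ofReal_sub _ (le_max_right a 0), ENNReal.ofReal_mul Real.pi_nonneg]
          exact mul_le_mul_right (ENNReal.ofReal_le_ofReal (by simp [a', ha']; linarith [le_max_left a (0:ℝ)])) _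

lemma fiber_bound {ι : Type*} [Fintype ι] (h2 : Fintype.card ι = 2) (cc : ι → ℝ)
    (a b : ℝ) (hab : a ≤ b) :
    volume {u : ι → ℝ | a ≤ ∑ j, (u j - cc j) ^ 2 ∧ ∑ j, (u j - cc j) ^ 2 ≤ b} ≤
      ENNReal.ofReal (Real.pi * (b - a)) := by
  classical
  have g : Fin 2 ≃ ι := (Fintype.equivFinOfCardEq h2).symm
  have hmp := volume_measurePreserving_piCongrLeft (fun _ : ι => ℝ) g
  set s : Set (ι → ℝ) :=
    {u : ι → ℝ | a ≤ ∑ j, (u j - cc j) ^ 2 ∧ ∑ j, (u j - cc j) ^ 2 ≤ b} with hs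
  have hsm : MeasurableSet s := by
    have hc : Continuous fun u : ι → ℝ => ∑ j, (u j - cc j) ^ 2 := by
      continuity
    exact (measurableSet_le measurable_const hc.measurable).inter
      (measurableSet_le hc.measurable measurable_const)
  rw [← hmp.measure_preimage hsm.nullMeasurableSet]
  have e2 := EuclideanSpace.volume_preserving_symm_measurableEquiv_toLp (Fin 2)
  rw [← e2.measure_preimage (((MeasurableEquiv.piCongrLeft (fun _ : ι => ℝ) g).measurable
    hsm).nullMeasurableSet)]
  set d : EuclideanSpace ℝ (Fin 2) := WithLp.toLp 2 (fun k => cc (g k)) with hd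
  have hpre : ((MeasurableEquiv.toLp 2 (Fin 2 → ℝ)).symm) ⁻¹'
      ((MeasurableEquiv.piCongrLeft (fun _ : ι => ℝ) g) ⁻¹' s) =
      {u : EuclideanSpace ℝ (Fin 2) | a ≤ dist u d ^ 2 ∧ dist u d ^ 2 ≤ b} := by
    ext w
    have hdist : dist w d ^ 2 = ∑ k, ((WithLp.ofLp w) k - d k) ^ 2 := by
      rw [EuclideanSpace.dist_eq, Real.sq_sqrt (by positivity)]
      simp [Real.dist_eq, sq_abs]
    have hw : ((MeasurableEquiv.toLp 2 (Fin 2 → ℝ)).symm) w = (WithLp.ofLp w) := rfl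
    have hsum : ∑ j, ((MeasurableEquiv.piCongrLeft (fun _ : ι => ℝ) g)
        ((WithLp.ofLp w)) j - cc j) ^ 2 = ∑ k, ((WithLp.ofLp w) k - d k) ^ 2 := by
      rw [← Equiv.sum_comp g (fun j => ((MeasurableEquiv.piCongrLeft (fun _ : ι => ℝ) g)
        ((WithLp.ofLp w)) j - cc j) ^ 2)]
      refine Finset.sum_congr rfl fun k _ => ?_
      have : (MeasurableEquiv.piCongrLeft (fun _ : ι => ℝ) g) ((WithLp.ofLp w)) (g k)
          = (WithLp.ofLp w) k := by
        simp only [MeasurableEquiv.piCongrLeft, MeasurableEquiv.coe_mk,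
          Equiv.piCongrLeft_apply_apply]
      rw [this, hd]
    simp only [Set.mem_preimage, hw, hs, Set.mem_setOf_eq, hsum, hdist]
  rw [hpre]
  exact annulus_vol_le d a b hab

lemma cylinder_shell_bound (n : ℕ) (hn : 3 ≤ n)
    (X : Set (EuclideanSpace ℝ (Fin (n - 2)))) (hXm : MeasurableSet X)
    (c : EuclideanSpace ℝ (Fin n)) (ε : ℝ) (hε0 : 0 < ε) (hε1 : ε ≤ 1) :
    volume ({x : EuclideanSpace ℝ (Fin n) |
        WithLp.toLp 2 (fun jj : Fin (n - 2) => x (Fin.castLE (Nat.sub_le n 2) jj)) ∈ X} ∩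
      (Metric.closedBall c 1 \ Metric.ball c (1 - ε))) ≤
      volume X * ENNReal.ofReal (Real.pi * (1 - (1 - ε) ^ 2)) := by
  classical
  set p : Fin n → Prop := fun j => (j : ℕ) < n - 2 with hp
  have hdp : DecidablePred p := fun j => Nat.decLt _ _
  let r : Fin (n - 2) ≃ {j : Fin n // p j} :=
    { toFun := fun jj => ⟨Fin.castLE (Nat.sub_le n 2) jj, jj.2⟩
      invFun := fun j => ⟨(j : Fin n).1, j.2⟩
      left_inv := fun jj => rfl
      right_inv := fun j => rfl }
  have e := (EuclideanSpace.volume_preserving_symm_measurableEquiv_toLp (Fin n)).symm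
  have e2 := (EuclideanSpace.volume_preserving_symm_measurableEquiv_toLp (Fin (n - 2))).symm
  set en := (MeasurableEquiv.toLp 2 (Fin n → ℝ)).symm
  set en2 := (MeasurableEquiv.toLp 2 (Fin (n - 2) → ℝ)).symm
  -- measurability of the projection
  have hprojm : Measurable (fun x : EuclideanSpace ℝ (Fin n) =>
      WithLp.toLp 2 (fun jj : Fin (n - 2) => x (Fin.castLE (Nat.sub_le n 2) jj))) := by
    exact en2.symm.measurable.comp
      (measurable_pi_lambda _ (fun jj => (measurable_pi_apply _).comp en.measurable))
  set S : Set (EuclideanSpace ℝ (Fin n)) :=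
    {x : EuclideanSpace ℝ (Fin n) |
        WithLp.toLp 2 (fun jj : Fin (n - 2) => x (Fin.castLE (Nat.sub_le n 2) jj)) ∈ X} ∩
      (Metric.closedBall c 1 \ Metric.ball c (1 - ε)) with hS
  have hSm : MeasurableSet S := by
    refine MeasurableSet.inter ?_ (measurableSet_closedBall.diff measurableSet_ball)
    exact hprojm hXm
  rw [← e.measure_preimage hSm.nullMeasurableSet]
  have q := (volume_preserving_piEquivPiSubtypeProd (fun _ : Fin n => ℝ) p).symm
  set qe := MeasurableEquiv.piEquivPiSubtypeProd (fun _ : Fin n => ℝ) p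
  have hpre1 : MeasurableSet (en.symm ⁻¹' S) := en.symm.measurable hSm
  rw [← q.measure_preimage hpre1.nullMeasurableSet]
  set R : ({j : Fin n // p j} → ℝ) → ℝ := fun y => ∑ j : {j : Fin n // p j}, (y j - c j.1) ^ 2
    with hR
  set t : ({j : Fin n // ¬p j} → ℝ) → ℝ :=
    fun u => ∑ j : {j : Fin n // ¬p j}, (u j - c j.1) ^ 2 with ht
  set X'' : Set ({j : Fin n // p j} → ℝ) :=
    {y | WithLp.toLp 2 (fun jj : Fin (n - 2) => y (r jj)) ∈ X} with hX''
  have hX''m : MeasurableSet X'' :=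
    (en2.symm.measurable.comp
      (measurable_pi_lambda _ (fun jj => measurable_pi_apply (r jj)))) hXm
  set bigset : Set (({j : Fin n // p j} → ℝ) × ({j : Fin n // ¬p j} → ℝ)) :=
    {yu | yu.1 ∈ X'' ∧ ((1 - ε) ^ 2 ≤ R yu.1 + t yu.2 ∧ R yu.1 + t yu.2 ≤ 1)} with hbig
  have hs3 : qe.symm ⁻¹' (en.symm ⁻¹' S) = bigset := by
    ext yu
    obtain ⟨y, u⟩ := yu
    have hz : ∀ j : Fin n, en.symm (qe.symm (y, u)) j
        = if h : p j then y ⟨j, h⟩ else u ⟨j, h⟩ := fun j => rfl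
    have hcond1 : (fun jj : Fin (n - 2) =>
        en.symm (qe.symm (y, u)) (Fin.castLE (Nat.sub_le n 2) jj)) =
        (fun jj : Fin (n - 2) => y (r jj)) := by
      funext jj
      rw [hz]
      exact dif_pos jj.2
    have hsum : ∑ j : Fin n, (en.symm (qe.symm (y, u)) j - c j) ^ 2 = R y + t u := by
      rw [← Fintype.sum_subtype_add_sum_subtype p
        (fun j : Fin n => (en.symm (qe.symm (y, u)) j - c j) ^ 2)]
      congr 1
      · refine Finset.sum_congr rfl fun j _ => ?_
        rw [hz, dif_pos j.2, Subtype.coe_eta]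
      · refine Finset.sum_congr rfl fun j _ => ?_
        rw [hz, dif_neg j.2, Subtype.coe_eta]
    have hdist : dist (en.symm (qe.symm (y, u))) c = Real.sqrt (R y + t u) := by
      rw [EuclideanSpace.dist_eq]
      simp only [Real.dist_eq, sq_abs]
      rw [hsum]
    have htnn : (0:ℝ) ≤ R y + t u := by positivity
    simp only [Set.mem_preimage, hS, Set.mem_inter_iff, Set.mem_setOf_eq, Set.mem_diff,
      Metric.mem_closedBall, Metric.mem_ball, not_lt, hbig, hcond1, hdist]
    constructor
    · rintro ⟨h1, h2, h3⟩
      refine ⟨h1, ?_, ?_⟩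
      · rw [Real.le_sqrt (by linarith) htnn] at h3
        exact h3
      · have := (Real.sqrt_le_iff.mp h2).2
        rwa [one_pow] at this
    · rintro ⟨h1, h2, h3⟩
      refine ⟨h1, ?_, ?_⟩
      · exact Real.sqrt_le_iff.mpr ⟨zero_le_one, by rwa [one_pow]⟩
      · exact (Real.le_sqrt (by linarith) htnn).mpr h2
  -- cardinality of the complement subtype
  have hcp : Fintype.card {j : Fin n // p j} = n - 2 := by
    have := Fintype.card_congr r
    rw [Fintype.card_fin] at this
    exact this.symm
  have h2 : Fintype.card {j : Fin n // ¬p j} = 2 := by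
    rw [Fintype.card_subtype_compl, Fintype.card_fin, hcp]
    omega
  -- volume of X'' equals volume of X
  have hvolX'' : volume X'' = volume X := by
    have g := volume_measurePreserving_piCongrLeft (fun _ : {j : Fin n // p j} => ℝ) r
    rw [← g.measure_preimage hX''m.nullMeasurableSet]
    have hgpre : (MeasurableEquiv.piCongrLeft (fun _ : {j : Fin n // p j} => ℝ) r) ⁻¹' X''
        = en2.symm ⁻¹' X := by
      ext z
      have hzz : (fun jj : Fin (n - 2) =>
          (MeasurableEquiv.piCongrLeft (fun _ : {j : Fin n // p j} => ℝ) r) z (r jj)) = z := by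
        funext jj
        simp only [MeasurableEquiv.piCongrLeft, MeasurableEquiv.coe_mk,
          Equiv.piCongrLeft_apply_apply]
      simp only [Set.mem_preimage, hX'', Set.mem_setOf_eq, hzz]
      exact Iff.rfl
    rw [hgpre, e2.measure_preimage hXm.nullMeasurableSet]
  -- main computation
  have hs3m : MeasurableSet bigset := by
    rw [← hs3]; exact qe.symm.measurable hpre1
  rw [hs3, Measure.volume_eq_prod, Measure.prod_apply hs3m]
  set M : ENNReal := ENNReal.ofReal (Real.pi * (1 - (1 - ε) ^ 2)) with hM
  calc ∫⁻ y, volume (Prod.mk y ⁻¹' bigset) ∂volume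
      ≤ ∫⁻ y, X''.indicator (fun _ => M) y ∂volume := by
        refine lintegral_mono fun y => ?_
        by_cases hy : y ∈ X''
        · rw [Set.indicator_of_mem hy]
          have hfib : Prod.mk y ⁻¹' bigset ⊆
              {u : {j : Fin n // ¬p j} → ℝ |
                (1 - ε) ^ 2 - R y ≤ ∑ j : {j : Fin n // ¬p j}, (u j - c j.1) ^ 2 ∧
                ∑ j : {j : Fin n // ¬p j}, (u j - c j.1) ^ 2 ≤ 1 - R y} := by
            rintro u ⟨-, h2', h3'⟩
            exact ⟨by simp only [ht] at h2' ⊢; linarith, by simp only [ht] at h3' ⊢; linarith⟩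
          refine le_trans (measure_mono hfib) ?_
          have := fiber_bound h2 (fun j : {j : Fin n // ¬p j} => c j.1)
            ((1 - ε) ^ 2 - R y) (1 - R y) (by nlinarith)
          refine le_trans this ?_
          rw [hM]
          apply le_of_eq
          congr 1
          ring
        · rw [Set.indicator_of_notMem hy]
          have : Prod.mk y ⁻¹' bigset = ∅ := by
            ext u
            simp only [Set.mem_preimage, hbig, Set.mem_setOf_eq, Set.mem_empty_iff_false,
              iff_false]
            rintro ⟨h1, -⟩
            exact hy h1
          simp [this]
    _ = M * volume X'' := lintegral_indicator_const hX''m M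
    _ = volume X * M := by rw [hvolX'', mul_comm]

lemma isometryEquiv_measurePreserving (n : ℕ)
    (f : EuclideanSpace ℝ (Fin n) ≃ᵢ EuclideanSpace ℝ (Fin n)) :
    MeasurePreserving f (volume : Measure (EuclideanSpace ℝ (Fin n))) volume := by
  have h1 : MeasurePreserving (f.toRealLinearIsometryEquiv : EuclideanSpace ℝ (Fin n) →
      EuclideanSpace ℝ (Fin n)) := f.toRealLinearIsometryEquiv.measurePreserving
  have h2 : MeasurePreserving (fun x : EuclideanSpace ℝ (Fin n) => x + f 0) :=
    measurePreserving_add_right volume (f 0)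
  have hfe : (f : EuclideanSpace ℝ (Fin n) → EuclideanSpace ℝ (Fin n)) =
      (fun x => x + f 0) ∘ (f.toRealLinearIsometryEquiv :
        EuclideanSpace ℝ (Fin n) → EuclideanSpace ℝ (Fin n)) := by
    funext x
    simp [IsometryEquiv.toRealLinearIsometryEquiv_apply, sub_add_cancel]
  rw [hfe]
  exact h2.comp h1

lemma shell_volume (n : ℕ) (hn : 1 ≤ n) (ε : ℝ) (hε0 : 0 ≤ ε) (hε1 : ε ≤ 1) :
    volume (Metric.closedBall (0 : EuclideanSpace ℝ (Fin n)) 1 \ Metric.ball 0 (1 - ε)) =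
      ENNReal.ofReal ((Real.sqrt Real.pi ^ n / Real.Gamma (n / 2 + 1)) * (1 - (1 - ε) ^ n)) := by
  have : Nonempty (Fin n) := Fin.pos_iff_nonempty.mp (by omega)
  set V : ℝ := Real.sqrt Real.pi ^ n / Real.Gamma (n / 2 + 1) with hV
  have hV0 : 0 ≤ V := by
    apply div_nonneg (by positivity)
    exact (Real.Gamma_pos_of_pos (by positivity)).le
  rw [measure_diff (Metric.ball_subset_closedBall.trans
        (Metric.closedBall_subset_closedBall (by linarith)))
      measurableSet_ball.nullMeasurableSet measure_ball_lt_top.ne,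
    EuclideanSpace.volume_closedBall, EuclideanSpace.volume_ball]
  simp only [Fintype.card_fin, ENNReal.ofReal_one, one_pow, one_mul]
  rw [← ENNReal.ofReal_pow (by linarith), ← ENNReal.ofReal_mul (pow_nonneg (by linarith) n),
    ← ENNReal.ofReal_sub _ (mul_nonneg (pow_nonneg (by linarith) n) hV0)]
  congr 1
  ring


/-- If the closed Euclidean unit ball in `ℝⁿ` (`n ≥ 3`) is covered by
`2`-dimensional Euclidean cylinders `Z i`, each an isometric image of `X i × ℝ²` with `X i` a
convex body in `ℝ^{n−2}`, then `Σ vol_{n−2}(X i) ≥ vol_{n−2}(B^{n−2}) = π^{n/2−1}/Γ(n/2)`. -/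
theorem covering_ball_by_two_dim_cylinders
    (n : ℕ) (hn : 3 ≤ n) (N : ℕ)
    (X : Fin N → Set (EuclideanSpace ℝ (Fin (n - 2))))
    (hX : ∀ i, IsCompact (X i) ∧ Convex ℝ (X i) ∧ (interior (X i)).Nonempty)
    (T : Fin N → (EuclideanSpace ℝ (Fin n) ≃ᵢ EuclideanSpace ℝ (Fin n)))
    (Z : Fin N → Set (EuclideanSpace ℝ (Fin n)))
    (hZ : ∀ i, Z i = T i ''
      {x | WithLp.toLp 2 (fun jj : Fin (n - 2) => x (Fin.castLE (Nat.sub_le n 2) jj)) ∈ X i})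
    (hcover : Metric.closedBall (0 : EuclideanSpace ℝ (Fin n)) 1 ⊆ ⋃ i, Z i) :
    ENNReal.ofReal (Real.pi ^ ((n : ℝ) / 2 - 1) / Real.Gamma ((n : ℝ) / 2)) ≤
      ∑ i, volume (X i) := by
    classical
  have hXm : ∀ i, MeasurableSet (X i) := fun i => (hX i).1.isClosed.measurableSet
  set V : ℝ := Real.sqrt Real.pi ^ n / Real.Gamma (n / 2 + 1) with hV
  have hGpos : 0 < Real.Gamma ((n : ℝ) / 2 + 1) := Real.Gamma_pos_of_pos (by positivity)
  have hV0 : 0 ≤ V := div_nonneg (by positivity) hGpos.le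
  have hfin : ∀ i, volume (X i) < ⊤ := fun i => (hX i).1.measure_lt_top
  have hsumfin : (∑ i, volume (X i)) ≠ ⊤ := (ENNReal.sum_lt_top.mpr fun i _ => hfin i).ne
  set Sr : ℝ := (∑ i, volume (X i)).toReal with hSr
  have hSr0 : 0 ≤ Sr := ENNReal.toReal_nonneg
  have hofReal : ENNReal.ofReal Sr = ∑ i, volume (X i) := ENNReal.ofReal_toReal hsumfin
  -- the ε-inequality
  have key : ∀ ε : ℝ, 0 < ε → ε ≤ 1 →
      V * (1 - (1 - ε) ^ n) ≤ Sr * (Real.pi * (1 - (1 - ε) ^ 2)) := by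
    intro ε hε0 hε1
    set shell := Metric.closedBall (0 : EuclideanSpace ℝ (Fin n)) 1 \ Metric.ball 0 (1 - ε)
      with hshell
    have hshellm : MeasurableSet shell := measurableSet_closedBall.diff measurableSet_ball
    have hshellsub : shell ⊆ ⋃ i, Z i ∩ shell := by
      intro x hx
      rcases Set.mem_iUnion.mp (hcover hx.1) with ⟨i, hi⟩
      exact Set.mem_iUnion.mpr ⟨i, hi, hx⟩
    have hbound : ∀ i, volume (Z i ∩ shell) ≤
        volume (X i) * ENNReal.ofReal (Real.pi * (1 - (1 - ε) ^ 2)) := by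
      intro i
      set C : Set (EuclideanSpace ℝ (Fin n)) :=
        {x | WithLp.toLp 2 (fun jj : Fin (n - 2) => x (Fin.castLE (Nat.sub_le n 2) jj)) ∈ X i} with hC
      have hCm : MeasurableSet C :=
        (((MeasurableEquiv.toLp 2 (Fin (n - 2) → ℝ)).symm).symm.measurable.comp
          (measurable_pi_lambda _ (fun jj => (measurable_pi_apply _).comp
            ((MeasurableEquiv.toLp 2 (Fin n → ℝ)).symm).measurable))) (hXm i)
      have hZC : Z i ∩ shell = T i '' (C ∩ (T i) ⁻¹' shell) := by
        rw [hZ i, Set.image_inter (T i).injective, Set.image_preimage_eq _ (T i).surjective]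
      have hmeas : MeasurableSet (C ∩ (T i) ⁻¹' shell) :=
        hCm.inter ((T i).continuous.measurable hshellm)
      have himg : volume (T i '' (C ∩ (T i) ⁻¹' shell)) = volume (C ∩ (T i) ⁻¹' shell) := by
        rw [Set.image_eq_preimage_of_inverse (T i).symm_apply_apply (T i).apply_symm_apply]
        exact (isometryEquiv_measurePreserving n (T i).symm).measure_preimage
          hmeas.nullMeasurableSet
      have hpreshell : (T i) ⁻¹' shell =
          Metric.closedBall ((T i).symm 0) 1 \ Metric.ball ((T i).symm 0) (1 - ε) := by
        rw [hshell, Set.preimage_diff, (T i).preimage_closedBall, (T i).preimage_ball]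
      calc volume (Z i ∩ shell) = volume (C ∩ (T i) ⁻¹' shell) := by rw [hZC, himg]
        _ ≤ _ := by
            rw [hpreshell, hC]
            exact cylinder_shell_bound n hn (X i) (hXm i) ((T i).symm 0) ε hε0 hε1
    have hle : volume shell ≤
        (∑ i, volume (X i)) * ENNReal.ofReal (Real.pi * (1 - (1 - ε) ^ 2)) := by
      calc volume shell ≤ volume (⋃ i, Z i ∩ shell) := measure_mono hshellsub
        _ ≤ ∑' i, volume (Z i ∩ shell) := measure_iUnion_le _
        _ = ∑ i, volume (Z i ∩ shell) := tsum_fintype _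
        _ ≤ ∑ i, volume (X i) * ENNReal.ofReal (Real.pi * (1 - (1 - ε) ^ 2)) :=
            Finset.sum_le_sum (fun i _ => hbound i)
        _ = _ := by rw [Finset.sum_mul]
    rw [shell_volume n (by omega) ε hε0.le hε1, ← hofReal, ← ENNReal.ofReal_mul hSr0] at hle
    exact (ENNReal.ofReal_le_ofReal_iff
      (mul_nonneg hSr0 (mul_nonneg Real.pi_nonneg (by nlinarith)))).mp hle
  -- pass to the limit
  have hVn : V * n ≤ Sr * (Real.pi * 2) := by
    set u : ℕ → ℝ := fun k => 1 / ((k : ℝ) + 2) with hu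
    have hu0 : ∀ k, 0 < u k := fun k => by positivity
    have hu1 : ∀ k, u k ≤ 1 := fun k => by
      rw [hu]
      rw [div_le_one (by positivity)]
      have : (0:ℝ) ≤ (k : ℝ) := Nat.cast_nonneg k
      linarith
    have hineq : ∀ k : ℕ, V * n * (1 - u k) ^ (n - 1) ≤ Sr * (Real.pi * (2 - u k)) := by
      intro k
      have h1 := key (u k) (hu0 k) (hu1 k)
      set tt : ℝ := 1 - u k with htt
      have htt0 : 0 ≤ tt := by have := hu1 k; simp only [htt]; linarith
      have htt1 : tt ≤ 1 := by have := hu0 k; simp only [htt]; linarith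
      have hgeom : (1 - tt) * ∑ i ∈ Finset.range n, tt ^ i = 1 - tt ^ n := by
        have h := geom_sum_mul tt n
        nlinarith [h]
      have hterm : ∀ i ∈ Finset.range n, tt ^ (n - 1) ≤ tt ^ i := fun i hi =>
        pow_le_pow_of_le_one htt0 htt1 (by
          have := Finset.mem_range.mp hi; omega)
      have hsum_ge : (n : ℝ) * tt ^ (n - 1) ≤ ∑ i ∈ Finset.range n, tt ^ i := by
        calc (n : ℝ) * tt ^ (n - 1) = ∑ _i ∈ Finset.range n, tt ^ (n - 1) := by
              rw [Finset.sum_const, Finset.card_range, nsmul_eq_mul]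
          _ ≤ _ := Finset.sum_le_sum hterm
      have hbern : (n : ℝ) * tt ^ (n - 1) * (1 - tt) ≤ 1 - tt ^ n := by
        rw [← hgeom]
        have h1tt : (0:ℝ) ≤ 1 - tt := by linarith
        calc (n : ℝ) * tt ^ (n - 1) * (1 - tt)
            ≤ (∑ i ∈ Finset.range n, tt ^ i) * (1 - tt) :=
              mul_le_mul_of_nonneg_right hsum_ge h1tt
          _ = (1 - tt) * ∑ i ∈ Finset.range n, tt ^ i := by ring
      have step : V * ((n : ℝ) * tt ^ (n - 1) * (1 - tt)) ≤
          Sr * (Real.pi * (1 - tt ^ 2)) :=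
        le_trans (mul_le_mul_of_nonneg_left hbern hV0) h1
      have h1mt : 1 - tt = u k := by rw [htt]; ring
      have h2 : 1 - tt ^ 2 = u k * (2 - u k) := by rw [htt]; ring
      rw [h1mt, h2] at step
      have step' : (V * n * tt ^ (n - 1)) * u k ≤ (Sr * (Real.pi * (2 - u k))) * u k := by
        nlinarith [step]
      exact (mul_le_mul_iff_of_pos_right (hu0 k)).mp step'
    have hulim : Filter.Tendsto u Filter.atTop (nhds 0) := by
      have h1 : Filter.Tendsto (fun k : ℕ => (k : ℝ) + 2) Filter.atTop Filter.atTop :=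
        Filter.tendsto_atTop_add_const_right _ 2 tendsto_natCast_atTop_atTop
      simpa [hu, one_div, Pi.inv_def] using h1.inv_tendsto_atTop
    have hL : Filter.Tendsto (fun k => V * n * (1 - u k) ^ (n - 1)) Filter.atTop
        (nhds (V * n)) := by
      have h1 : Filter.Tendsto (fun k => (1 : ℝ) - u k) Filter.atTop (nhds 1) := by
        simpa using tendsto_const_nhds.sub hulim
      have h2 := h1.pow (n - 1)
      simpa using (tendsto_const_nhds (x := V * (n:ℝ))).mul h2
    have hR : Filter.Tendsto (fun k => Sr * (Real.pi * (2 - u k))) Filter.atTop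
        (nhds (Sr * (Real.pi * 2))) := by
      have h1 : Filter.Tendsto (fun k => (2 : ℝ) - u k) Filter.atTop (nhds 2) := by
        simpa using tendsto_const_nhds.sub hulim
      exact tendsto_const_nhds.mul (tendsto_const_nhds.mul h1)
    exact le_of_tendsto_of_tendsto' hL hR hineq
  -- final arithmetic
  have hGpos' : 0 < Real.Gamma ((n : ℝ) / 2) := Real.Gamma_pos_of_pos (by positivity)
  have hπ := Real.pi_pos
  have hn0 : (0:ℝ) < (n : ℝ) := by positivity
  have hsqrtpow : Real.sqrt Real.pi ^ n = Real.pi ^ ((n : ℝ) / 2) := by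
    rw [Real.sqrt_eq_rpow, ← Real.rpow_natCast (Real.pi ^ ((1:ℝ)/2)) n,
      ← Real.rpow_mul Real.pi_nonneg]
    norm_num
    rw [mul_comm, mul_one_div]
  have hGa : Real.Gamma ((n : ℝ) / 2 + 1) = ((n : ℝ) / 2) * Real.Gamma ((n : ℝ) / 2) :=
    Real.Gamma_add_one (by positivity)
  have heq : Real.pi ^ ((n : ℝ) / 2 - 1) / Real.Gamma ((n : ℝ) / 2) = V * n / (2 * Real.pi) := by
    rw [hV, hGa, hsqrtpow, Real.rpow_sub hπ, Real.rpow_one]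
    field_simp
  have htarget : Real.pi ^ ((n : ℝ) / 2 - 1) / Real.Gamma ((n : ℝ) / 2) ≤ Sr := by
    rw [heq, div_le_iff₀ (by positivity)]
    linarith [hVn]
  calc ENNReal.ofReal (Real.pi ^ ((n : ℝ) / 2 - 1) / Real.Gamma ((n : ℝ) / 2))
      ≤ ENNReal.ofReal Sr := ENNReal.ofReal_le_ofReal htarget
    _ = ∑ i, volume (X i) := hofReal
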